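/- Let t be an integer and set f₁ = (2863 + 10764t)/13 and f₂ = (1207 + 26455t)/13 as rational numbers. Then f₁^6 + f₂^6 is an integer, and there are no integers c, d with c^6 + d^6 = f₁^6 + f₂^6. In particular, f₁^6 + f₂^6 is an integer that is a sum of two rational sixth powers but not a sum of two integer sixth powers. -/

import Mathlib

lemma zmod13_aux : ∀ x y : ZMod 13, x ^ 6 + y ^ 6 ≠ 5 := by decide

/-- For every integer `t`, with `f₁ = (2863 + 10764t)/13` and `f₂ = (1207 + 26455t)/13`
in `ℚ`, the rational number `f₁^6 + f₂^6` is an integer that is not a sum of two integer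
sixth powers (and it is, manifestly, a sum of two rational sixth powers). -/
theorem family_not_sum_of_two_integer_sixth_powers (t : ℤ) :
    ∃ k : ℤ,
      (((2863 + 10764 * t : ℤ) : ℚ) / 13) ^ 6 + (((1207 + 26455 * t : ℤ) : ℚ) / 13) ^ 6
        = (k : ℚ) ∧
      ¬ ∃ c d : ℤ, c ^ 6 + d ^ 6 = k := by
  refine ⟨5 + 13 * (8825842511889 + 204463394631366 * t + 2215974468895395 * t ^ 2
    + 19705491956080580 * t ^ 3 + 196886285342613555 * t ^ 4
    + 1535084006740041966 * t ^ 5 + 5487937890605386333 * t ^ 6), ?_, ?_⟩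
  · have h13 : (13 : ℚ) ≠ 0 := by norm_num
    field_simp
    push_cast
    ring
  · rintro ⟨c, d, h⟩
    have h' := congrArg (fun z : ℤ => (z : ZMod 13)) h
    push_cast at h'
    have h0 : (13 : ZMod 13) = 0 := by decide
    rw [h0] at h'
    simp at h'
    exact zmod13_aux _ _ (by rw [h'])
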